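/- Let F be a field of characteristic ≠ 2, R = F[h] the polynomial ring, and A = R[X]/(X² − (h/2)²), a free R-module with basis (1, X). For r : ℕ and S ⊆ Fin r, let e_S ∈ A^{⊗r} be the basis tensor whose i-th factor is 1 if i ∈ S and X if i ∉ S. For any signs ε : Fin r → {1, −1}, set α = ⊗ᵢ (X + ε(i)·(h/2)) and β = ⊗ᵢ (X − ε(i)·(h/2)) in A^{⊗r}. Then α + β = 2 · Σ_{S, |S| even} (∏_{i ∈ S} ε(i)) · (h/2)^{|S|} · e_S and α − β = h · Σ_{S, |S| odd} (∏_{i ∈ S} ε(i)) · 2^{1−|S|} · h^{|S|−1} · e_S. In particular, ξ := (α + β)/2 and η := (α − β)/h are well-defined elements of A^{⊗r}, ξ is supported on basis tensors e_S with |S| even, η on those with |S| odd, and all coordinates of ξ and η with respect to the basis (e_S) lie in the subring F[h²] ⊆ F[h]. -/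

import Mathlib

open Polynomial
open scoped TensorProduct

/-- The polynomial `h/2 = (2⁻¹ : F)·h` in `R = F[h]` (where `h` is the variable). -/
noncomputable def halfh (F : Type*) [Field F] : Polynomial F :=
  Polynomial.C (2⁻¹ : F) * Polynomial.X

/-- The Bar-Natan algebra `A = R[X]/(X² − (h/2)²)` over `R = F[h]`. -/
noncomputable abbrev ABN (F : Type*) [Field F] : Type _ :=
  AdjoinRoot ((X : (Polynomial F)[X]) ^ 2 - C (halfh F ^ 2))

/-- The image of the variable `X` in `A = R[X]/(X² − (h/2)²)`. -/
noncomputable def XBN (F : Type*) [Field F] : ABN F :=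
  AdjoinRoot.root _

/-- The basis tensor `e_S ∈ A^{⊗r}` whose `i`-th factor is `1` if `i ∈ S` and
`X` if `i ∉ S`. -/
noncomputable def eS (F : Type*) [Field F] (r : ℕ) (S : Finset (Fin r)) :
    ⨂[Polynomial F] _ : Fin r, ABN F :=
  ⨂ₜ[Polynomial F] i, (if i ∈ S then 1 else XBN F)

lemma key_expand {F : Type*} [Field F] (r : ℕ) (sgn : Fin r → Polynomial F)
    (e : Polynomial F) :
    (⨂ₜ[Polynomial F] i, (XBN F +
        algebraMap (Polynomial F) (ABN F) (e * (sgn i * halfh F)))) =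
      ∑ S : Finset (Fin r),
        (e ^ S.card * ((∏ i ∈ S, sgn i) * halfh F ^ S.card)) • eS F r S := by
  classical
  have h0 : (fun i => XBN F + algebraMap (Polynomial F) (ABN F) (e * (sgn i * halfh F)))
      = (fun i => algebraMap (Polynomial F) (ABN F) (e * (sgn i * halfh F)))
        + (fun _ => XBN F) := by
    funext i; simp [add_comm]
  show (PiTensorProduct.tprod (Polynomial F)) _ = _
  rw [h0, MultilinearMap.map_add_univ]
  refine Finset.sum_congr rfl fun S _ => ?_
  have h1 : S.piecewise (fun i => algebraMap (Polynomial F) (ABN F) (e * (sgn i * halfh F)))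
      (fun _ => XBN F)
      = fun i => (if i ∈ S then e * (sgn i * halfh F) else 1) •
          (if i ∈ S then (1 : ABN F) else XBN F) := by
    funext i; by_cases h : i ∈ S
    · rw [Finset.piecewise_eq_of_mem _ _ _ h, if_pos h, if_pos h,
        Algebra.algebraMap_eq_smul_one]
    · rw [Finset.piecewise_eq_of_notMem _ _ _ h, if_neg h, if_neg h, one_smul]
  rw [h1, MultilinearMap.map_smul_univ, Finset.prod_ite_mem, Finset.univ_inter,
    Finset.prod_mul_distrib, Finset.prod_mul_distrib, Finset.prod_const, Finset.prod_const]
  rfl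

lemma adjoin_facts {F : Type*} [Field F] (r : ℕ) (sgn : Fin r → Polynomial F)
    (hsgn : ∀ i, sgn i = 1 ∨ sgn i = -1) :
    (∀ c : F, Polynomial.C c ∈ Algebra.adjoin F {(Polynomial.X : Polynomial F) ^ 2}) ∧
    (∀ S : Finset (Fin r), (∏ i ∈ S, sgn i) ∈
      Algebra.adjoin F {(Polynomial.X : Polynomial F) ^ 2}) ∧
    (∀ k : ℕ, Even k → (Polynomial.X : Polynomial F) ^ k ∈
      Algebra.adjoin F {(Polynomial.X : Polynomial F) ^ 2}) := by
  refine ⟨fun c => ?_, fun S => ?_, fun k hk => ?_⟩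
  · have : Polynomial.C c = algebraMap F (Polynomial F) c := rfl
    rw [this]; exact Subalgebra.algebraMap_mem _ c
  · refine Subalgebra.prod_mem _ fun i _ => ?_
    rcases hsgn i with h | h <;> rw [h]
    · exact one_mem _
    · exact neg_mem (one_mem _)
  · obtain ⟨m, rfl⟩ := hk
    rw [← two_mul, pow_mul]
    exact pow_mem (Algebra.subset_adjoin (Set.mem_singleton _)) m

lemma scalar_id {F : Type*} [Field F] (hF : (2 : F) ≠ 0) (k : ℕ) (hk : Odd k)
    (p : Polynomial F) :
    (2 : Polynomial F) * (p * halfh F ^ k) =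
      Polynomial.X * (p * Polynomial.C ((2 : F) ^ (1 - (k : ℤ))) *
        Polynomial.X ^ (k - 1)) := by
  have hz : (2:F) ^ ((1:ℤ) - (k:ℤ)) = 2 * (2⁻¹)^k := by
    rw [zpow_sub₀ hF, zpow_one, zpow_natCast, inv_pow, div_eq_mul_inv]
  have hX : (Polynomial.X : Polynomial F) ^ k = Polynomial.X * Polynomial.X ^ (k-1) := by
    conv_lhs => rw [← Nat.succ_pred_eq_of_pos hk.pos]
    rw [pow_succ']
    rfl
  have h2 : (2 : Polynomial F) = Polynomial.C 2 := by
    rw [map_ofNat]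
  unfold halfh
  rw [hz, mul_pow, ← map_pow, map_mul, h2, hX]
  ring

/-- Over `R = F[h]` (`char F ≠ 2`) and `A = R[X]/(X² − (h/2)²)`,
for signs `ε : Fin r → {1, −1}` set `α = ⊗ᵢ (X + ε(i)·(h/2))` and
`β = ⊗ᵢ (X − ε(i)·(h/2))` in `A^{⊗r}`.  Then
`α + β = 2 · Σ_{|S| even} (∏_{i∈S} ε(i)) (h/2)^{|S|} e_S` and
`α − β = h · Σ_{|S| odd} (∏_{i∈S} ε(i)) 2^{1−|S|} h^{|S|−1} e_S`.  In particular
`ξ = (α+β)/2` and `η = (α−β)/h` are well defined, supported on even (resp. odd)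
basis tensors, and all their coordinates lie in the subring `F[h²] ⊆ F[h]`. -/
theorem stmt19 {F : Type*} [Field F] (hF : (2 : F) ≠ 0) (r : ℕ)
    (sgn : Fin r → Polynomial F) (hsgn : ∀ i, sgn i = 1 ∨ sgn i = -1)
    (α β : ⨂[Polynomial F] _ : Fin r, ABN F)
    (hα : α = ⨂ₜ[Polynomial F] i,
      (XBN F + algebraMap (Polynomial F) (ABN F) (sgn i * halfh F)))
    (hβ : β = ⨂ₜ[Polynomial F] i,
      (XBN F - algebraMap (Polynomial F) (ABN F) (sgn i * halfh F))) :
    α + β = (2 : Polynomial F) •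
        ∑ S ∈ Finset.univ.filter (fun S : Finset (Fin r) => Even S.card),
          ((∏ i ∈ S, sgn i) * halfh F ^ S.card) • eS F r S ∧
      α - β = (Polynomial.X : Polynomial F) •
        ∑ S ∈ Finset.univ.filter (fun S : Finset (Fin r) => Odd S.card),
          ((∏ i ∈ S, sgn i) * Polynomial.C ((2 : F) ^ (1 - (S.card : ℤ))) *
            Polynomial.X ^ (S.card - 1)) • eS F r S ∧
      (∃ ξ η : ⨂[Polynomial F] _ : Fin r, ABN F,
        α + β = (2 : Polynomial F) • ξ ∧
          α - β = (Polynomial.X : Polynomial F) • η) ∧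
      (∀ S : Finset (Fin r), Even S.card →
        (∏ i ∈ S, sgn i) * halfh F ^ S.card ∈
          Algebra.adjoin F {(Polynomial.X : Polynomial F) ^ 2}) ∧
      (∀ S : Finset (Fin r), Odd S.card →
        (∏ i ∈ S, sgn i) * Polynomial.C ((2 : F) ^ (1 - (S.card : ℤ))) *
            Polynomial.X ^ (S.card - 1) ∈
          Algebra.adjoin F {(Polynomial.X : Polynomial F) ^ 2}) := by
  classical
  obtain ⟨hC, hprod, hXeven⟩ := adjoin_facts r sgn hsgn
  set T : Finset (Fin r) → (⨂[Polynomial F] _ : Fin r, ABN F) :=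
    fun S => ((∏ i ∈ S, sgn i) * halfh F ^ S.card) • eS F r S with hT
  -- expansions of α and β
  have hαsum : α = ∑ S : Finset (Fin r), T S := by
    have h := key_expand r sgn (1 : Polynomial F)
    simp only [one_mul, one_pow] at h
    rw [hα, h]
  have hβsum : β = ∑ S : Finset (Fin r), ((-1 : Polynomial F) ^ S.card) • T S := by
    have h := key_expand r sgn (-1 : Polynomial F)
    have h2 : (⨂ₜ[Polynomial F] i, (XBN F +
        algebraMap (Polynomial F) (ABN F) ((-1) * (sgn i * halfh F)))) =
        ⨂ₜ[Polynomial F] i, (XBN F -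
        algebraMap (Polynomial F) (ABN F) (sgn i * halfh F)) := by
      congr 1; funext i
      rw [neg_one_mul, map_neg, ← sub_eq_add_neg]
    rw [hβ, ← h2, h]
    exact Finset.sum_congr rfl fun S _ => by rw [hT, smul_smul]
  have hadd : α + β = ∑ S : Finset (Fin r),
      ((1 + (-1 : Polynomial F) ^ S.card)) • T S := by
    rw [hαsum, hβsum, ← Finset.sum_add_distrib]
    exact Finset.sum_congr rfl fun S _ => by rw [add_smul, one_smul]
  have hsub : α - β = ∑ S : Finset (Fin r),
      ((1 - (-1 : Polynomial F) ^ S.card)) • T S := by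
    rw [hαsum, hβsum, ← Finset.sum_sub_distrib]
    exact Finset.sum_congr rfl fun S _ => by
      have := sub_smul (1 : Polynomial F) ((-1 : Polynomial F) ^ S.card) (T S)
      rw [one_smul] at this; exact this.symm
  -- part 1
  have part1 : α + β = (2 : Polynomial F) •
      ∑ S ∈ Finset.univ.filter (fun S : Finset (Fin r) => Even S.card), T S := by
    rw [hadd, ← Finset.sum_filter_add_sum_filter_not Finset.univ
      (fun S : Finset (Fin r) => Even S.card)]
    have h0 : ∑ S ∈ Finset.univ.filter
        (fun S : Finset (Fin r) => ¬ Even S.card),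
        ((1 + (-1 : Polynomial F) ^ S.card)) • T S = 0 := by
      refine Finset.sum_eq_zero fun S hS => ?_
      have hodd : Odd S.card := Nat.not_even_iff_odd.mp (Finset.mem_filter.mp hS).2
      rw [hodd.neg_one_pow, add_neg_cancel, zero_smul]
    rw [h0, add_zero, Finset.smul_sum]
    refine Finset.sum_congr rfl fun S hS => ?_
    have heven : Even S.card := (Finset.mem_filter.mp hS).2
    rw [heven.neg_one_pow]; norm_num
  -- part 2
  have part2 : α - β = (Polynomial.X : Polynomial F) •
      ∑ S ∈ Finset.univ.filter (fun S : Finset (Fin r) => Odd S.card),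
        ((∏ i ∈ S, sgn i) * Polynomial.C ((2 : F) ^ (1 - (S.card : ℤ))) *
          Polynomial.X ^ (S.card - 1)) • eS F r S := by
    rw [hsub, ← Finset.sum_filter_add_sum_filter_not Finset.univ
      (fun S : Finset (Fin r) => Odd S.card)]
    have h0 : ∑ S ∈ Finset.univ.filter
        (fun S : Finset (Fin r) => ¬ Odd S.card),
        ((1 - (-1 : Polynomial F) ^ S.card)) • T S = 0 := by
      refine Finset.sum_eq_zero fun S hS => ?_
      have heven : Even S.card := Nat.not_odd_iff_even.mp (Finset.mem_filter.mp hS).2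
      rw [heven.neg_one_pow, sub_self, zero_smul]
    rw [h0, add_zero, Finset.smul_sum]
    refine Finset.sum_congr rfl fun S hS => ?_
    have hodd : Odd S.card := (Finset.mem_filter.mp hS).2
    rw [hodd.neg_one_pow, hT, smul_smul, smul_smul]
    congr 1
    have : (1 : Polynomial F) - (-1) = 2 := by norm_num
    rw [this]
    exact scalar_id hF S.card hodd _
  refine ⟨part1, part2, ⟨_, _, part1, part2⟩, fun S hS => ?_, fun S hS => ?_⟩
  · refine mul_mem (hprod S) ?_
    rw [halfh, mul_pow, ← map_pow]
    exact mul_mem (hC _) (hXeven S.card hS)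
  · exact mul_mem (mul_mem (hprod S) (hC _))
      (hXeven (S.card - 1) (Nat.Odd.sub_odd hS odd_one))
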